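/- Let φ : ℝ^n → ℝ ∪ {+∞} be proper, lower semicontinuous, asymptotically level stable and bounded below, let B ∈ ℝ^{m×n}, λ > 0, γ > 0, p > 0. Then Ψ_γ(x) = φ(x) + λ Σ_{i=1}^m min(γ|(Bx)_i|^p, 1) is asymptotically level stable and bounded below; consequently Ψ_γ attains its infimum on ℝ^n. -/

import Mathlib

open Filter Topology

noncomputable def l2 {n : ℕ} (x : Fin n → ℝ) : ℝ := Real.sqrt (∑ i, (x i)^2)

noncomputable def l0 {m : ℕ} (y : Fin m → ℝ) : ℕ :=
  (Finset.univ.filter fun i => y i ≠ 0).card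

/-- Asymptotic function `f_∞(x) = liminf_{x'→x, t→+∞} f(t x')/t`. -/
noncomputable def asympFn {n : ℕ} (f : (Fin n → ℝ) → EReal) (x : Fin n → ℝ) : EReal :=
  Filter.liminf (fun p : (Fin n → ℝ) × ℝ => f (p.2 • p.1) / (p.2 : EReal)) ((𝓝 x) ×ˢ atTop)

/-- Asymptotically level stable function. -/
def ALS {n : ℕ} (f : (Fin n → ℝ) → EReal) : Prop :=
  ∀ ρ : ℝ, 0 < ρ → ∀ t : ℕ → ℝ, (∃ M : ℝ, ∀ k, |t k| ≤ M) →
  ∀ (x : ℕ → Fin n → ℝ) (xb : Fin n → ℝ),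
    (∀ k, f (x k) ≤ (t k : EReal)) →
    Tendsto (fun k => l2 (x k)) atTop atTop →
    Tendsto (fun k => (l2 (x k))⁻¹ • x k) atTop (𝓝 xb) →
    asympFn f xb = 0 →
    ∃ k0 : ℕ, ∀ k ≥ k0, f (x k - ρ • xb) ≤ (t k : EReal)

/-- The capped ℓp regularized objective. -/
noncomputable def Psi {n m : ℕ} (φ : (Fin n → ℝ) → EReal) (B : Matrix (Fin m) (Fin n) ℝ)
    (lam γ p : ℝ) (x : Fin n → ℝ) : EReal :=
  φ x + ((lam * ∑ i, min (γ * |B.mulVec x i| ^ p) 1 : ℝ) : EReal)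

/-! ### auxiliary lemmas -/

section Aux

lemma l2_nonneg {n : ℕ} (x : Fin n → ℝ) : 0 ≤ l2 x := Real.sqrt_nonneg _

lemma l2_sq {n : ℕ} (x : Fin n → ℝ) : l2 x ^ 2 = ∑ i, (x i)^2 :=
  Real.sq_sqrt (Finset.sum_nonneg fun i _ => sq_nonneg _)

lemma abs_le_l2 {n : ℕ} (x : Fin n → ℝ) (i : Fin n) : |x i| ≤ l2 x := by
  rw [← Real.sqrt_sq_eq_abs]
  exact Real.sqrt_le_sqrt (Finset.single_le_sum (fun j _ => sq_nonneg (x j)) (Finset.mem_univ i))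

lemma l2_cont {n : ℕ} : Continuous (l2 (n := n)) :=
  Real.continuous_sqrt.comp (continuous_finset_sum _ fun i _ => (continuous_apply i).pow 2)

lemma l2_smul {n : ℕ} (c : ℝ) (x : Fin n → ℝ) : l2 (c • x) = |c| * l2 x := by
  simp only [l2, Pi.smul_apply, smul_eq_mul, mul_pow, ← Finset.mul_sum]
  rw [Real.sqrt_mul (sq_nonneg c), Real.sqrt_sq_eq_abs]

lemma norm_le_l2 {n : ℕ} (x : Fin n → ℝ) : ‖x‖ ≤ l2 x := by
  rw [pi_norm_le_iff_of_nonneg (l2_nonneg x)]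
  intro i
  rw [Real.norm_eq_abs]
  exact abs_le_l2 x i

lemma asympFn_nonneg {n : ℕ} {f : (Fin n → ℝ) → EReal} {c : ℝ} (hc : ∀ x, (c : EReal) ≤ f x)
    (xb : Fin n → ℝ) : 0 ≤ asympFn f xb := by
  rw [asympFn, le_liminf_iff]
  intro y hy
  obtain ⟨z, hyz, hz0⟩ := EReal.exists_between_coe_real hy
  have hzneg : z < 0 := by exact_mod_cast hz0
  have hev : ∀ᶠ q : (Fin n → ℝ) × ℝ in (𝓝 xb) ×ˢ atTop, max 1 (|c| / (-z)) ≤ q.2 :=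
    Eventually.prod_inr (eventually_ge_atTop _) _
  filter_upwards [hev] with q hq
  have ht1 : (1:ℝ) ≤ q.2 := le_trans (le_max_left _ _) hq
  have htpos : (0:ℝ) < q.2 := lt_of_lt_of_le one_pos ht1
  have h1 : z ≤ c / q.2 := by
    have h2 : |c| / (-z) ≤ q.2 := le_trans (le_max_right _ _) hq
    rw [div_le_iff₀ (by linarith : (0:ℝ) < -z)] at h2
    rw [le_div_iff₀ htpos]
    nlinarith [neg_abs_le c]
  calc (y : EReal) < (z : EReal) := hyz
    _ ≤ ((c / q.2 : ℝ) : EReal) := by exact_mod_cast h1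
    _ = (c : EReal) / (q.2 : EReal) := EReal.coe_div c q.2
    _ ≤ f (q.2 • q.1) / (q.2 : EReal) :=
        EReal.div_le_div_right_of_nonneg (by exact_mod_cast htpos.le) (hc _)

lemma asympFn_le_zero {n : ℕ} {f : (Fin n → ℝ) → EReal} {t : ℕ → ℝ} {M : ℝ}
    (hM : ∀ k, |t k| ≤ M) {x : ℕ → Fin n → ℝ} {xb : Fin n → ℝ}
    (hfx : ∀ k, f (x k) ≤ (t k : EReal))
    (hnorm : Tendsto (fun k => l2 (x k)) atTop atTop)
    (hdir : Tendsto (fun k => (l2 (x k))⁻¹ • x k) atTop (𝓝 xb)) :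
    asympFn f xb ≤ 0 := by
  set u : (Fin n → ℝ) × ℝ → EReal := fun p => f (p.2 • p.1) / (p.2 : EReal) with hu
  set s : ℕ → (Fin n → ℝ) × ℝ := fun k => ((l2 (x k))⁻¹ • x k, l2 (x k)) with hs
  have hts : Tendsto s atTop ((𝓝 xb) ×ˢ atTop) := hdir.prodMk hnorm
  have h1 : asympFn f xb ≤ liminf (u ∘ s) atTop := by
    rw [liminf_comp]
    exact liminf_le_liminf_of_le (le_def.mpr fun S hS => hts hS)
  refine le_trans h1 ?_
  by_contra hpos
  push_neg at hpos
  obtain ⟨ε, hε1, hε2⟩ := EReal.exists_between_coe_real hpos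
  have hεpos : (0:ℝ) < ε := by exact_mod_cast hε1
  have hev : ∀ᶠ k in atTop, max 1 (M / ε) ≤ l2 (x k) := hnorm.eventually_ge_atTop _
  have : ∀ᶠ k in atTop, (u ∘ s) k ≤ (ε : EReal) := by
    filter_upwards [hev] with k hk
    have ht1 : (1:ℝ) ≤ l2 (x k) := le_trans (le_max_left _ _) hk
    have htpos : (0:ℝ) < l2 (x k) := lt_of_lt_of_le one_pos ht1
    have hre : (l2 (x k)) • ((l2 (x k))⁻¹ • x k) = x k := smul_inv_smul₀ htpos.ne' _
    have h2 : t k / l2 (x k) ≤ ε := by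
      rw [div_le_iff₀ htpos]
      have hM2 : M / ε ≤ l2 (x k) := le_trans (le_max_right _ _) hk
      rw [div_le_iff₀ hεpos] at hM2
      nlinarith [le_trans (le_abs_self (t k)) (hM k), mul_le_mul_of_nonneg_left ht1 hεpos.le]
    calc (u ∘ s) k = f (x k) / (l2 (x k) : EReal) := by simp [hu, hs, hre]
      _ ≤ (t k : EReal) / (l2 (x k) : EReal) :=
          EReal.div_le_div_right_of_nonneg (by exact_mod_cast htpos.le) (hfx k)
      _ = ((t k / l2 (x k) : ℝ) : EReal) := (EReal.coe_div _ _).symm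
      _ ≤ (ε : EReal) := by exact_mod_cast h2
  have h3 := liminf_le_of_frequently_le' (this.frequently)
  exact absurd (lt_of_lt_of_le hε2 h3) (lt_irrefl _)

lemma lsc_add_cont {n : ℕ} {φ : (Fin n → ℝ) → EReal} (hlsc : LowerSemicontinuous φ)
    {g : (Fin n → ℝ) → ℝ} (hg : Continuous g) :
    LowerSemicontinuous (fun x => φ x + ((g x : ℝ) : EReal)) := by
  intro x0 y hy
  change y < φ x0 + ((g x0 : ℝ) : EReal) at hy
  have key : ∃ A B : ℝ, (A : EReal) < φ x0 ∧ B < g x0 ∧ y < ((A + B : ℝ) : EReal) := by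
    by_cases htop : φ x0 = ⊤
    · have hyt : y < ⊤ := lt_of_lt_of_le hy le_top
      obtain ⟨q, hq, -⟩ := EReal.exists_between_coe_real hyt
      exact ⟨q - (g x0 - 1), g x0 - 1, by rw [htop]; exact EReal.coe_lt_top _, by linarith,
        by norm_num [hq]⟩
    · have hbot : φ x0 ≠ ⊥ := by
        intro hb
        rw [hb] at hy
        simp at hy
      lift φ x0 to ℝ using ⟨htop, hbot⟩ with a ha
      have hy' : y < ((a + g x0 : ℝ) : EReal) := by
        rw [EReal.coe_add]; exact hy
      obtain ⟨q, hq1, hq2⟩ := EReal.exists_between_coe_real hy'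
      have hq2' : q < a + g x0 := by exact_mod_cast hq2
      refine ⟨a - (a + g x0 - q)/2, g x0 - (a + g x0 - q)/2, ?_, by linarith, ?_⟩
      · exact_mod_cast (by linarith : a - (a + g x0 - q)/2 < a)
      · have : (q:ℝ) = (a - (a + g x0 - q)/2) + (g x0 - (a + g x0 - q)/2) := by ring
        rw [← this]; exact hq1
  obtain ⟨A, B, hA, hB, hy2⟩ := key
  have h1 : ∀ᶠ z in 𝓝 x0, (A : EReal) < φ z := hlsc x0 A hA
  have h2 : ∀ᶠ z in 𝓝 x0, B < g z := (hg.tendsto x0).eventually (eventually_gt_nhds hB)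
  filter_upwards [h1, h2] with z hz1 hz2
  calc y < ((A + B : ℝ) : EReal) := hy2
    _ = (A : EReal) + (B : EReal) := EReal.coe_add A B
    _ < φ z + (g z : EReal) := EReal.add_lt_add hz1 (EReal.coe_lt_coe_iff.mpr hz2)

lemma als_attains {n : ℕ} {f : (Fin n → ℝ) → EReal} (hproper : ∃ x, f x ≠ ⊤)
    (hlsc : LowerSemicontinuous f) (hals : ALS f) {c : ℝ} (hc : ∀ x, (c : EReal) ≤ f x) :
    ∃ xs, ∀ x, f xs ≤ f x := by
  classical
  set ι : EReal := ⨅ x, f x with hι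
  have hιtop : ι ≠ ⊤ := by
    obtain ⟨x0, hx0⟩ := hproper
    exact fun h => hx0 (top_le_iff.mp (h ▸ iInf_le f x0))
  have hιbot : ι ≠ ⊥ := by
    intro h
    have h2 : (c : EReal) ≤ ι := le_iInf hc
    rw [h] at h2
    simp at h2
  set ι0 : ℝ := ι.toReal with hι0def
  have hι0 : (ι0 : EReal) = ι := EReal.coe_toReal hιtop hιbot
  suffices hsuff : ∃ xs, f xs ≤ (ι0 : EReal) by
    obtain ⟨xs, hxs⟩ := hsuff
    exact ⟨xs, fun x => le_trans (le_trans hxs (le_of_eq hι0)) (iInf_le f x)⟩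
  by_contra hno
  push_neg at hno
  set t : ℕ → ℝ := fun k => ι0 + 1/(k+1) with ht
  have htpos : ∀ k : ℕ, (0:ℝ) < 1/((k:ℝ)+1) := by intro k; positivity
  have htlim : Tendsto t atTop (𝓝 ι0) := by
    have h0 : Tendsto (fun k : ℕ => 1/((k:ℝ)+1)) atTop (𝓝 0) :=
      tendsto_one_div_add_atTop_nhds_zero_nat
    simpa only [add_zero] using tendsto_const_nhds.add h0
  set L : ℕ → Set (Fin n → ℝ) := fun k => {z | f z ≤ (t k : EReal)} with hL
  have hLne : ∀ k, (L k).Nonempty := by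
    intro k
    have h1 : ι < (t k : EReal) := by
      rw [← hι0, EReal.coe_lt_coe_iff]
      show ι0 < ι0 + 1/((k:ℝ)+1)
      linarith [htpos k]
    rw [hι, iInf_lt_iff] at h1
    obtain ⟨z, hz⟩ := h1
    exact ⟨z, hz.le⟩
  set S : ℕ → Set ℝ := fun k => l2 '' L k with hS
  have hSne : ∀ k, (S k).Nonempty := fun k => (hLne k).image _
  have hSbdd : ∀ k, BddBelow (S k) := by
    intro k
    exact ⟨0, fun a ⟨z, _, hz⟩ => hz ▸ l2_nonneg z⟩
  set d : ℕ → ℝ := fun k => sInf (S k) with hd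
  have hd0 : ∀ k, 0 ≤ d k := fun k => le_csInf (hSne k) (fun a ⟨z, _, hz⟩ => hz ▸ l2_nonneg z)
  have hchoice : ∀ k, ∃ z, z ∈ L k ∧ l2 z < d k + 1/((k:ℝ)+1) := by
    intro k
    obtain ⟨a, ⟨z, hzL, hza⟩, ha⟩ :=
      exists_lt_of_csInf_lt (hSne k) (lt_add_of_pos_right (d k) (htpos k))
    exact ⟨z, hzL, hza ▸ ha⟩
  choose x hxL hxd using hchoice
  have hfx : ∀ k, f (x k) ≤ (t k : EReal) := hxL
  -- a convergent subsequence with indices going to infinity yields a contradiction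
  have limit_contra : ∀ (σ : ℕ → ℕ) (xb : Fin n → ℝ), StrictMono σ →
      Tendsto (fun j => x (σ j)) atTop (𝓝 xb) → False := by
    intro σ xb hσ htd
    obtain ⟨q, hq1, hq2⟩ := EReal.exists_between_coe_real (hno xb)
    have hq1' : ι0 < q := by exact_mod_cast hq1
    have h1 : ∀ᶠ z in 𝓝 xb, (q : EReal) < f z := hlsc xb q hq2
    have h2 : ∀ᶠ j in atTop, (q : EReal) < f (x (σ j)) := htd.eventually h1
    have h3 : ∀ᶠ j in atTop, t (σ j) < q :=
      (htlim.comp hσ.tendsto_atTop).eventually (eventually_lt_nhds hq1')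
    obtain ⟨j, hj1, hj2⟩ := (h2.and h3).exists
    have : (q : EReal) < (q : EReal) :=
      lt_of_lt_of_le hj1 (le_trans (hfx (σ j)) (by exact_mod_cast hj2.le))
    exact lt_irrefl _ this
  by_cases hT : Tendsto (fun k => l2 (x k)) atTop atTop
  · -- unbounded case: use ALS
    set u : ℕ → Fin n → ℝ := fun k => (l2 (x k))⁻¹ • x k with hu
    have hub : ∀ k, u k ∈ Metric.closedBall (0 : Fin n → ℝ) 1 := by
      intro k
      rw [Metric.mem_closedBall, dist_zero_right]
      refine le_trans (norm_le_l2 _) ?_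
      rw [hu]
      simp only
      rw [l2_smul]
      rcases eq_or_lt_of_le (l2_nonneg (x k)) with h | h
      · simp [← h]
      · rw [abs_of_nonneg (inv_nonneg.2 (le_of_lt h)), inv_mul_cancel₀ h.ne']
    obtain ⟨xb, -, σ, hσ, hσtend⟩ :=
      (isCompact_closedBall (0 : Fin n → ℝ) 1).tendsto_subseq hub
    have hTσ : Tendsto (fun j => l2 (x (σ j))) atTop atTop := hT.comp hσ.tendsto_atTop
    have hM : ∀ j, |t (σ j)| ≤ |ι0| + 1 := by
      intro j
      have h1 : (0:ℝ) < 1/((σ j : ℝ)+1) := htpos (σ j)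
      have h2 : 1/((σ j : ℝ)+1) ≤ 1 := by
        rw [div_le_one (by positivity)]
        simp [Nat.cast_nonneg]
      calc |t (σ j)| ≤ |ι0| + |1/((σ j:ℝ)+1)| := abs_add_le _ _
        _ ≤ |ι0| + 1 := by rw [abs_of_pos h1]; linarith
    have hfxσ : ∀ j, f (x (σ j)) ≤ (t (σ j) : EReal) := fun j => hfx (σ j)
    have hdirσ : Tendsto (fun j => (l2 (x (σ j)))⁻¹ • x (σ j)) atTop (𝓝 xb) := hσtend
    have hasymp : asympFn f xb = 0 :=
      le_antisymm (asympFn_le_zero hM hfxσ hTσ hdirσ) (asympFn_nonneg hc xb)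
    obtain ⟨k0, hk0⟩ := hals 1 one_pos (fun j => t (σ j)) ⟨|ι0| + 1, hM⟩
      (fun j => x (σ j)) xb hfxσ hTσ hdirσ hasymp
    -- dot product convergence
    have hl2xb : l2 xb = 1 := by
      have h1 : Tendsto (fun j => l2 (u (σ j))) atTop (𝓝 (l2 xb)) :=
        (l2_cont.tendsto xb).comp hσtend
      have hev1 : ∀ᶠ j in atTop, (1:ℝ) ≤ l2 (x (σ j)) := hTσ.eventually_ge_atTop 1
      have h2 : (fun j => l2 (u (σ j))) =ᶠ[atTop] fun _ => (1:ℝ) := by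
        filter_upwards [hev1] with j hj
        have hpos : (0:ℝ) < l2 (x (σ j)) := lt_of_lt_of_le one_pos hj
        rw [hu]
        simp only
        rw [l2_smul, abs_of_nonneg (inv_nonneg.2 hpos.le), inv_mul_cancel₀ hpos.ne']
      exact tendsto_nhds_unique (h1.congr' h2) tendsto_const_nhds
    have hxbsq : ∑ i, xb i * xb i = 1 := by
      have h := l2_sq xb
      rw [hl2xb, one_pow] at h
      have h2 : ∑ i, xb i * xb i = ∑ i, (xb i)^2 :=
        Finset.sum_congr rfl fun i _ => (pow_two (xb i)).symm
      rw [h2]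
      exact h.symm
    have hdot : Tendsto (fun j => ∑ i, u (σ j) i * xb i) atTop (𝓝 1) := by
      rw [← hxbsq]
      apply tendsto_finset_sum
      intro i _
      exact (((continuous_apply i).tendsto xb).comp hσtend).mul_const (xb i)
    have hev2 : ∀ᶠ j in atTop, (3/4 : ℝ) ≤ ∑ i, u (σ j) i * xb i :=
      hdot.eventually (eventually_ge_nhds (by norm_num))
    have hev3 : ∀ᶠ j in atTop, (2:ℝ) ≤ l2 (x (σ j)) := hTσ.eventually_ge_atTop 2
    have hev4 : ∀ᶠ j in atTop, 3 ≤ σ j := by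
      filter_upwards [eventually_ge_atTop 3] with j hj
      exact le_trans hj (hσ.le_apply)
    obtain ⟨j, ⟨⟨hj2, hj3⟩, hj4⟩, hjk0⟩ :=
      (((hev2.and hev3).and hev4).and (eventually_ge_atTop k0)).exists
    -- the contradiction
    have hyL : f (x (σ j) - (1:ℝ) • xb) ≤ (t (σ j) : EReal) := hk0 j hjk0
    set y : Fin n → ℝ := x (σ j) - (1:ℝ) • xb with hy
    have hDle : d (σ j) ≤ l2 y := csInf_le (hSbdd (σ j)) ⟨y, hyL, rfl⟩
    have hLpos : (0:ℝ) < l2 (x (σ j)) := lt_of_lt_of_le two_pos hj3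
    have hy2 : l2 y ^ 2 = l2 (x (σ j)) ^ 2 - 2 * (∑ i, x (σ j) i * xb i) + 1 := by
      rw [l2_sq]
      have hterm : ∀ i : Fin n, (y i)^2 = (x (σ j) i)^2 - 2*(x (σ j) i * xb i) + (xb i)*(xb i) := by
        intro i
        rw [hy]
        simp only [Pi.sub_apply, Pi.smul_apply, smul_eq_mul, one_mul]
        ring
      rw [Finset.sum_congr rfl fun i _ => hterm i]
      rw [Finset.sum_add_distrib, Finset.sum_sub_distrib, ← Finset.mul_sum, hxbsq, l2_sq]
    have hdotrel : ∑ i, x (σ j) i * xb i = l2 (x (σ j)) * ∑ i, u (σ j) i * xb i := by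
      rw [Finset.mul_sum]
      refine Finset.sum_congr rfl fun i _ => ?_
      rw [hu]
      simp only [Pi.smul_apply, smul_eq_mul]
      field_simp
    have hquarter : 1/((σ j : ℝ)+1) ≤ 1/4 := by
      have h3 : (3:ℝ) ≤ (σ j : ℝ) := by exact_mod_cast hj4
      rw [div_le_div_iff₀ (by linarith) (by norm_num)]
      linarith
    have hxdj : l2 (x (σ j)) < d (σ j) + 1/((σ j:ℝ)+1) := hxd (σ j)
    have hsq : d (σ j) ^ 2 ≤ l2 y ^ 2 := pow_le_pow_left₀ (hd0 (σ j)) hDle 2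
    nlinarith [mul_le_mul_of_nonneg_left hj2 hLpos.le, hsq, hy2, hdotrel, hj3, hxdj, hquarter,
      hd0 (σ j)]
  · -- bounded case: convergent subsequence exists
    rw [tendsto_atTop] at hT
    push_neg at hT
    obtain ⟨R, hR⟩ := hT
    obtain ⟨σ, hσ, hσR⟩ := Filter.extraction_of_frequently_atTop hR
    have hmem : ∀ j, x (σ j) ∈ Metric.closedBall (0 : Fin n → ℝ) (max R 0) := by
      intro j
      rw [Metric.mem_closedBall, dist_zero_right]
      refine le_trans (norm_le_l2 _) (le_trans ?_ (le_max_left R 0))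
      exact (hσR j).le
    obtain ⟨xb, -, τ, hτ, hτtend⟩ :=
      (isCompact_closedBall (0 : Fin n → ℝ) (max R 0)).tendsto_subseq hmem
    exact limit_contra (σ ∘ τ) xb (hσ.comp hτ) hτtend
end Aux

section Main

variable {n m : ℕ}

noncomputable def gfun (B : Matrix (Fin m) (Fin n) ℝ) (lam γ p : ℝ) (x : Fin n → ℝ) : ℝ :=
  lam * ∑ i, min (γ * |B.mulVec x i| ^ p) 1

lemma gfun_nonneg (B : Matrix (Fin m) (Fin n) ℝ) {lam γ : ℝ} (p : ℝ) (hlam : 0 < lam)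
    (hγ : 0 < γ) (x : Fin n → ℝ) : 0 ≤ gfun B lam γ p x := by
  apply mul_nonneg hlam.le
  apply Finset.sum_nonneg
  intro i _
  exact le_min (mul_nonneg hγ.le (Real.rpow_nonneg (abs_nonneg _) _)) zero_le_one

lemma gfun_le (B : Matrix (Fin m) (Fin n) ℝ) {lam : ℝ} (γ p : ℝ) (hlam : 0 < lam)
    (x : Fin n → ℝ) : gfun B lam γ p x ≤ lam * m := by
  apply mul_le_mul_of_nonneg_left _ hlam.le
  calc (∑ i, min (γ * |B.mulVec x i| ^ p) 1) ≤ ∑ _i : Fin m, (1:ℝ) :=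
        Finset.sum_le_sum fun i _ => min_le_right _ _
    _ = m := by simp

lemma gfun_cont (B : Matrix (Fin m) (Fin n) ℝ) (lam γ : ℝ) {p : ℝ} (hp : 0 < p) :
    Continuous (gfun B lam γ p) := by
  apply continuous_const.mul
  apply continuous_finset_sum
  intro i _
  apply Continuous.min _ continuous_const
  apply continuous_const.mul
  have h1 : Continuous fun x : Fin n → ℝ => B.mulVec x i := by
    simp only [Matrix.mulVec, dotProduct]
    exact continuous_finset_sum _ fun j _ => continuous_const.mul (continuous_apply j)
  exact (Real.continuous_rpow_const hp.le).comp h1.abs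

end Main

/-- If `φ` is proper, lsc, asymptotically level stable and bounded below, then `Ψ_γ` is
asymptotically level stable and bounded below, and attains its infimum. -/
theorem Psi_ALS_and_attains (n m : ℕ) (φ : (Fin n → ℝ) → EReal)
    (hproper : ∃ x, φ x ≠ ⊤) (hnb : ∀ x, φ x ≠ ⊥)
    (hlsc : LowerSemicontinuous φ) (hals : ALS φ)
    (hbdd : ∃ c : ℝ, ∀ x, (c : EReal) ≤ φ x)
    (B : Matrix (Fin m) (Fin n) ℝ) (lam γ p : ℝ)
    (hlam : 0 < lam) (hγ : 0 < γ) (hp : 0 < p) :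
    ALS (Psi φ B lam γ p) ∧
    (∃ c : ℝ, ∀ x, (c : EReal) ≤ Psi φ B lam γ p x) ∧
    (∃ xs : Fin n → ℝ, ∀ x, Psi φ B lam γ p xs ≤ Psi φ B lam γ p x) := by
  obtain ⟨c, hc⟩ := hbdd
  have hPsieq : ∀ x, Psi φ B lam γ p x = φ x + ((gfun B lam γ p x : ℝ) : EReal) := fun x => rfl
  have hg0 : ∀ x, (0:EReal) ≤ ((gfun B lam γ p x : ℝ) : EReal) := by
    intro x
    exact_mod_cast gfun_nonneg B p hlam hγ x
  have hPsiφ : ∀ x, φ x ≤ Psi φ B lam γ p x := by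
    intro x
    rw [hPsieq]
    exact le_add_of_nonneg_right (hg0 x)
  have hPsibdd : ∀ x, (c : EReal) ≤ Psi φ B lam γ p x := fun x => le_trans (hc x) (hPsiφ x)
  have hALS : ALS (Psi φ B lam γ p) := by
    rintro ρ hρ t ⟨M, hM⟩ x xb hfx hnorm hdir hasymp
    -- asympFn φ xb = 0
    have haφ : asympFn φ xb = 0 := by
      apply le_antisymm
      · rw [← hasymp]
        have hev : ∀ᶠ q : (Fin n → ℝ) × ℝ in (𝓝 xb) ×ˢ atTop,
            φ (q.2 • q.1) / (q.2 : EReal) ≤ Psi φ B lam γ p (q.2 • q.1) / (q.2 : EReal) := by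
          filter_upwards [Eventually.prod_inr (eventually_ge_atTop (0:ℝ)) _] with q hq
          exact EReal.div_le_div_right_of_nonneg (by exact_mod_cast hq) (hPsiφ _)
        exact liminf_le_liminf hev
      · exact asympFn_nonneg hc xb
    set t' : ℕ → ℝ := fun k => t k - gfun B lam γ p (x k) with ht'
    have hb' : ∀ k, |t' k| ≤ M + lam * m := by
      intro k
      refine le_trans (abs_sub _ _) ?_
      have h1 : |gfun B lam γ p (x k)| ≤ lam * m := by
        rw [abs_of_nonneg (gfun_nonneg B p hlam hγ _)]
        exact gfun_le B γ p hlam _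
      linarith [hM k]
    have hφx : ∀ k, φ (x k) ≤ (t' k : EReal) := by
      intro k
      have h := hfx k
      rw [hPsieq] at h
      have h2 := add_le_add_left h ((-(gfun B lam γ p (x k)) : ℝ) : EReal)
      have hL : φ (x k) + ((gfun B lam γ p (x k) : ℝ) : EReal)
          + ((-(gfun B lam γ p (x k)) : ℝ) : EReal) = φ (x k) := by
        rw [add_assoc, ← EReal.coe_add]
        simp
      have hR : ((t k : ℝ) : EReal) + ((-(gfun B lam γ p (x k)) : ℝ) : EReal)
          = ((t' k : ℝ) : EReal) := by
        rw [← EReal.coe_add]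
        norm_num [ht', sub_eq_add_neg]
      rwa [hL, hR] at h2
    obtain ⟨k0, hk0⟩ := hals ρ hρ t' ⟨M + lam * m, hb'⟩ x xb hφx hnorm hdir haφ
    -- the regularizer terms eventually agree
    have hBcont : ∀ i, Continuous fun z : Fin n → ℝ => B.mulVec z i := by
      intro i
      simp only [Matrix.mulVec, dotProduct]
      exact continuous_finset_sum _ fun j _ => continuous_const.mul (continuous_apply j)
    have hBdir : ∀ i, Tendsto (fun k => B.mulVec ((l2 (x k))⁻¹ • x k) i) atTop
        (𝓝 (B.mulVec xb i)) := fun i => ((hBcont i).tendsto xb).comp hdir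
    have hbig : ∀ v : ℝ, (γ⁻¹) ^ p⁻¹ ≤ |v| → min (γ * |v| ^ p) 1 = 1 := by
      intro v hv
      apply min_eq_right
      have h2 : γ⁻¹ ≤ |v| ^ p := by
        rw [← Real.rpow_inv_rpow (inv_nonneg.2 hγ.le) hp.ne']
        exact Real.rpow_le_rpow (Real.rpow_nonneg (inv_nonneg.2 hγ.le) _) hv hp.le
      calc (1:ℝ) = γ * γ⁻¹ := (mul_inv_cancel₀ hγ.ne').symm
        _ ≤ γ * |v| ^ p := mul_le_mul_of_nonneg_left h2 hγ.le
    have hterm : ∀ i, ∀ᶠ k in atTop,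
        min (γ * |B.mulVec (x k - ρ • xb) i| ^ p) 1 = min (γ * |B.mulVec (x k) i| ^ p) 1 := by
      intro i
      by_cases hz : B.mulVec xb i = 0
      · apply Eventually.of_forall
        intro k
        have heq : B.mulVec (x k - ρ • xb) i = B.mulVec (x k) i := by
          rw [Matrix.mulVec_sub, Matrix.mulVec_smul]
          simp [hz]
        rw [heq]
      · have habs : Tendsto (fun k => |B.mulVec (x k) i|) atTop atTop := by
          have h2 : Tendsto (fun k => |B.mulVec ((l2 (x k))⁻¹ • x k) i| * l2 (x k))
              atTop atTop :=
            Tendsto.pos_mul_atTop (abs_pos.2 hz) ((continuous_abs.tendsto _).comp (hBdir i)) hnorm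
          apply h2.congr'
          filter_upwards [hnorm.eventually_ge_atTop 1] with k hk
          have hpos : (0:ℝ) < l2 (x k) := lt_of_lt_of_le one_pos hk
          have h4 : B.mulVec ((l2 (x k))⁻¹ • x k) i = (l2 (x k))⁻¹ * B.mulVec (x k) i := by
            rw [Matrix.mulVec_smul]
            simp
          rw [h4, abs_mul, abs_of_nonneg (inv_nonneg.2 hpos.le)]
          field_simp
        have habs2 : Tendsto (fun k => |B.mulVec (x k - ρ • xb) i|) atTop atTop := by
          have hlb : ∀ k, |B.mulVec (x k) i| - ρ * |B.mulVec xb i|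
              ≤ |B.mulVec (x k - ρ • xb) i| := by
            intro k
            rw [Matrix.mulVec_sub, Matrix.mulVec_smul]
            simp only [Pi.sub_apply, Pi.smul_apply, smul_eq_mul]
            have h3 := abs_sub_abs_le_abs_sub (B.mulVec (x k) i) (ρ * B.mulVec xb i)
            rw [abs_mul, abs_of_pos hρ] at h3
            linarith
          exact tendsto_atTop_mono hlb (tendsto_atTop_add_const_right _ _ habs)
        filter_upwards [habs.eventually_ge_atTop ((γ⁻¹) ^ p⁻¹),
          habs2.eventually_ge_atTop ((γ⁻¹) ^ p⁻¹)] with k h1 h2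
        rw [hbig _ h2, hbig _ h1]
    have hsum : ∀ᶠ k in atTop, gfun B lam γ p (x k - ρ • xb) = gfun B lam γ p (x k) := by
      filter_upwards [eventually_all.2 hterm] with k hk
      unfold gfun
      congr 1
      exact Finset.sum_congr rfl fun i _ => hk i
    obtain ⟨k1, hk1⟩ := eventually_atTop.1 hsum
    refine ⟨max k0 k1, fun k hk => ?_⟩
    have h1 := hk0 k (le_trans (le_max_left _ _) hk)
    have h2 := hk1 k (le_trans (le_max_right _ _) hk)
    calc Psi φ B lam γ p (x k - ρ • xb)
        = φ (x k - ρ • xb) + ((gfun B lam γ p (x k) : ℝ) : EReal) := by rw [hPsieq, h2]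
      _ ≤ ((t' k : ℝ) : EReal) + ((gfun B lam γ p (x k) : ℝ) : EReal) := add_le_add_left h1 _
      _ = ((t k : ℝ) : EReal) := by
          rw [← EReal.coe_add, ht']
          norm_num
  refine ⟨hALS, ⟨c, hPsibdd⟩, ?_⟩
  apply als_attains ?_ ?_ hALS hPsibdd
  · obtain ⟨x0, hx0⟩ := hproper
    refine ⟨x0, ?_⟩
    rw [hPsieq]
    exact (EReal.add_lt_top hx0 (EReal.coe_ne_top _)).ne
  · exact lsc_add_cont hlsc (gfun_cont B lam γ hp)
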